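/- arXiv:0810.2441 — 2 statements merged into one kernel-verified Lean document; each statement's English description precedes it below -/
import Mathlib

section
/- Let A = (a_1,...,a_m) and B = (b_1,...,b_n) be alphabets of independent variables, and let R(A,B) = ∏_{i=1}^m ∏_{j=1}^n (a_i - b_j) be their resultant. Then R(A,B) = S_{(n^m)}(A - B), where (n^m) is the rectangular partition with m parts each equal to n. -/
/-- The generating series `∏_{a ∈ A} (1 - a z)` of an alphabet `A` (a finite
multiset of elements of a commutative ring `R`). -/
noncomputable def gen {R : Type*} [CommRing R] (A : Multiset R) : PowerSeries R :=
  (A.map (fun a => 1 - PowerSeries.C a * PowerSeries.X)).prod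

/-- `IsSeriesOf A B S` says that `S : ℤ → R` is the family of complete functions
`S_j(A - B)` of the difference of alphabets `A - B`, i.e. `S j = 0` for `j < 0` and
`∑_j S_j z^j = ∏_{b ∈ B}(1 - b z) / ∏_{a ∈ A}(1 - a z)`, formulated as
`(∑_j S_j z^j) · ∏_{a ∈ A}(1 - a z) = ∏_{b ∈ B}(1 - b z)` in `R⟦z⟧`. -/
def IsSeriesOf {R : Type*} [CommRing R] (A B : Multiset R) (S : ℤ → R) : Prop :=
  (∀ j : ℤ, j < 0 → S j = 0) ∧
    (PowerSeries.mk fun n : ℕ => S (n : ℤ)) * gen A = gen B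

/-- The Schur function `S_I(A - B)` of a finite sequence `I = (i_1, …, i_s)`
(written in increasing, "French", order), given the complete functions
`S = (S_j(A-B))_j`, defined by the Jacobi–Trudi determinant
`det(S_{i_p + p - q})_{1 ≤ p,q ≤ s}`. -/
noncomputable def schur {R : Type*} [CommRing R] (S : ℤ → R) {s : ℕ} (I : Fin s → ℤ) : R :=
  Matrix.det (Matrix.of fun p q : Fin s => S (I p + (p : ℤ) - (q : ℤ)))

/- ### Auxiliary lemmas -/

open PowerSeries in
lemma constantCoeff_gen {R : Type*} [CommRing R] (A : Multiset R) :
    constantCoeff (gen A) = 1 := by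
  rw [gen, ← Multiset.prod_hom _ (constantCoeff)]
  rw [Multiset.map_map]
  convert Multiset.prod_map_one
  simp

open PowerSeries in
lemma gen_mul_invOfUnit {R : Type*} [CommRing R] (A : Multiset R) :
    gen A * invOfUnit (gen A) 1 = 1 :=
  mul_invOfUnit _ _ (by rw [constantCoeff_gen]; rfl)

lemma mul_gen_cancel {R : Type*} [CommRing R] (A : Multiset R) {φ ψ : PowerSeries R}
    (h : φ * gen A = ψ * gen A) : φ = ψ := by
  have h2 := congrArg (· * PowerSeries.invOfUnit (gen A) 1) h
  simpa [mul_assoc, gen_mul_invOfUnit] using h2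

lemma gen_cons {R : Type*} [CommRing R] (a : R) (A : Multiset R) :
    gen (a ::ₘ A) = (1 - PowerSeries.C a * PowerSeries.X) * gen A := by
  rw [gen, Multiset.map_cons, Multiset.prod_cons]; rfl

open PowerSeries in
lemma coeff_gen_eq_zero {R : Type*} [CommRing R] (A : Multiset R) :
    ∀ {k : ℕ}, Multiset.card A < k → coeff k (gen A) = 0 := by
  induction A using Multiset.induction with
  | empty =>
    intro k hk
    have : gen (0 : Multiset R) = 1 := by simp [gen]
    rw [this]
    rw [PowerSeries.coeff_one, if_neg (by omega)]
  | cons a A ih =>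
    intro k hk
    rw [Multiset.card_cons] at hk
    obtain ⟨k, rfl⟩ : ∃ k', k = k' + 1 := ⟨k - 1, by omega⟩
    rw [gen_cons, sub_mul, one_mul, mul_assoc, map_sub, coeff_C_mul, coeff_succ_X_mul]
    rw [ih (by omega), ih (by omega), mul_zero, sub_zero]

/-- The canonical complete-functions family of a pair of alphabets. -/
noncomputable def seriesOf {R : Type*} [CommRing R] (A B : Multiset R) : ℤ → R :=
  fun j => if 0 ≤ j then
    PowerSeries.coeff j.toNat (gen B * PowerSeries.invOfUnit (gen A) 1) else 0

open PowerSeries in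
lemma isSeriesOf_seriesOf {R : Type*} [CommRing R] (A B : Multiset R) :
    IsSeriesOf A B (seriesOf A B) := by
  constructor
  · intro j hj; rw [seriesOf, if_neg (by omega)]
  · have : (PowerSeries.mk fun n : ℕ => seriesOf A B (n : ℤ))
        = gen B * invOfUnit (gen A) 1 := by
      ext n
      rw [coeff_mk, seriesOf, if_pos (by positivity), Int.toNat_natCast]
    rw [this, mul_assoc, mul_comm (invOfUnit (gen A) 1), gen_mul_invOfUnit, mul_one]

lemma isSeriesOf_unique {R : Type*} [CommRing R] {A B : Multiset R} {S T : ℤ → R}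
    (hS : IsSeriesOf A B S) (hT : IsSeriesOf A B T) : S = T := by
  have h := mul_gen_cancel A (hS.2.trans hT.2.symm)
  funext j
  rcases lt_or_ge j 0 with hj | hj
  · rw [hS.1 j hj, hT.1 j hj]
  · obtain ⟨n, rfl⟩ : ∃ n : ℕ, j = (n : ℤ) := ⟨j.toNat, (Int.toNat_of_nonneg hj).symm⟩
    have := congrArg (PowerSeries.coeff n) h
    simpa using this

open PowerSeries in
lemma isSeriesOf_map {R R' : Type*} [CommRing R] [CommRing R'] (φ : R →+* R')
    {A B : Multiset R} {S : ℤ → R} (h : IsSeriesOf A B S) :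
    IsSeriesOf (A.map φ) (B.map φ) (fun j => φ (S j)) := by
  have hgen : ∀ C : Multiset R, PowerSeries.map φ (gen C) = gen (C.map φ) := by
    intro C
    rw [gen, ← Multiset.prod_hom _ (PowerSeries.map φ), Multiset.map_map, gen, Multiset.map_map]
    congr 1
    apply Multiset.map_congr rfl
    intro a _
    simp [PowerSeries.map_C, PowerSeries.map_X]
  constructor
  · intro j hj; simp [h.1 j hj]
  · have := congrArg (PowerSeries.map φ) h.2
    rw [map_mul, hgen, hgen] at this
    have h2 : PowerSeries.map φ (PowerSeries.mk fun n : ℕ => S (n : ℤ))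
        = PowerSeries.mk fun n : ℕ => φ (S (n : ℤ)) := by
      ext n; simp [coeff_map]
    rw [h2] at this
    exact this

open PowerSeries in
lemma mk_shift {R : Type*} [CommRing R] (U : ℤ → R) (hU0 : ∀ j : ℤ, j < 0 → U j = 0) (x : R) :
    (PowerSeries.mk fun n : ℕ => U (n : ℤ) - x * U ((n : ℤ) - 1))
      = (1 - C x * X) * PowerSeries.mk (fun n : ℕ => U (n : ℤ)) := by
  ext n
  rw [coeff_mk, sub_mul, one_mul, mul_assoc, map_sub, coeff_C_mul]
  cases n with
  | zero =>
    have h1 : coeff 0 (X * PowerSeries.mk fun n : ℕ => U (n : ℤ)) = 0 := by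
      rw [coeff_zero_eq_constantCoeff, map_mul]
      simp
    have h2 : ((0 : ℕ) : ℤ) - 1 < 0 := by norm_num
    rw [h1, coeff_mk, mul_zero, hU0 _ h2, mul_zero]
  | succ k =>
    rw [coeff_succ_X_mul, coeff_mk, coeff_mk]
    congr 2
    push_cast; ring

open PowerSeries in
lemma isSeriesOf_shift {R : Type*} [CommRing R] {A B : Multiset R} {U S : ℤ → R} {x : R}
    (hU : IsSeriesOf A B U) (hS : IsSeriesOf A (x ::ₘ B) S) :
    ∀ j : ℤ, S j = U j - x * U (j - 1) := by
  have key : (PowerSeries.mk fun n : ℕ => S (n : ℤ))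
      = PowerSeries.mk fun n : ℕ => U (n : ℤ) - x * U ((n : ℤ) - 1) := by
    rw [mk_shift U hU.1 x]
    apply mul_gen_cancel A
    rw [mul_assoc, hU.2, hS.2, gen_cons]
  intro j
  rcases lt_or_ge j 0 with hj | hj
  · rw [hS.1 j hj, hU.1 j hj, hU.1 (j-1) (by omega), mul_zero, sub_zero]
  · obtain ⟨n, rfl⟩ : ∃ n : ℕ, j = (n : ℤ) := ⟨j.toNat, (Int.toNat_of_nonneg hj).symm⟩
    have := congrArg (PowerSeries.coeff n) key
    simpa using this

open PowerSeries in
lemma isSeriesOf_erase {R : Type*} [CommRing R] [DecidableEq R] {A B : Multiset R}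
    {U : ℤ → R} {x : R}
    (hU : IsSeriesOf A B U) (hx : x ∈ A) :
    IsSeriesOf (A.erase x) B (fun j => U j - x * U (j - 1)) := by
  constructor
  · intro j hj
    show U j - x * U (j - 1) = 0
    rw [hU.1 j hj, hU.1 (j-1) (by omega), mul_zero, sub_zero]
  · rw [mk_shift U hU.1 x, mul_assoc, mul_left_comm, ← gen_cons,
      Multiset.cons_erase hx, hU.2]

open PowerSeries Finset in
lemma conv_sum {R : Type*} [CommRing R] {A B : Multiset R} {S : ℤ → R}
    (hS : IsSeriesOf A B S) (m : ℕ) (hm : Multiset.card A < m) (i : ℕ) :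
    ∑ q : Fin m, S ((i : ℤ) - (q : ℕ)) * PowerSeries.coeff q (gen A)
      = PowerSeries.coeff i (gen B) := by
  have hfin := Fin.sum_univ_eq_sum_range
    (fun q => S ((i : ℤ) - q) * PowerSeries.coeff q (gen A)) m
  rw [hfin]
  have hbig : ∀ N : ℕ, m ≤ N →
      ∑ q ∈ range m, S ((i : ℤ) - q) * coeff q (gen A)
        = ∑ q ∈ range N, S ((i : ℤ) - q) * coeff q (gen A) := by
    intro N hN
    apply Finset.sum_subset (range_subset_range.mpr hN)
    intro q _ hq
    rw [mem_range, not_lt] at hq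
    rw [coeff_gen_eq_zero A (lt_of_lt_of_le hm hq), mul_zero]
  have hsmall :
      ∑ q ∈ range (i + 1), S ((i : ℤ) - q) * coeff q (gen A)
        = ∑ q ∈ range (m + i + 1), S ((i : ℤ) - q) * coeff q (gen A) := by
    apply Finset.sum_subset (range_subset_range.mpr (by omega))
    intro q _ hq
    rw [mem_range, not_lt] at hq
    rw [hS.1 _ (by omega), zero_mul]
  rw [hbig (m + i + 1) (by omega), ← hsmall]
  have hrefl := Finset.sum_range_reflect
    (fun q => S ((i : ℤ) - q) * coeff q (gen A)) (i + 1)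
  rw [← hrefl, ← hS.2, coeff_mul, Finset.Nat.sum_antidiagonal_eq_sum_range_succ_mk]
  apply Finset.sum_congr rfl
  intro k hk
  rw [mem_range] at hk
  rw [coeff_mk]
  have e1 : i + 1 - 1 - k = i - k := by omega
  rw [e1]
  congr 1
  congr 1
  omega

open PowerSeries in
lemma det_eq_zero_of_small {K : Type*} [Field K] {A B : Multiset K} {S : ℤ → K}
    (hS : IsSeriesOf A B S) (m n : ℕ) (hm : Multiset.card A < m)
    (hn : Multiset.card B < n) :
    Matrix.det (Matrix.of fun p q : Fin m => S ((n : ℤ) + (p : ℕ) - (q : ℕ))) = 0 := by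
  classical
  rw [← Matrix.exists_mulVec_eq_zero_iff]
  refine ⟨fun q => coeff q (gen A), ?_, ?_⟩
  · intro h
    have := congrFun h ⟨0, by omega⟩
    simp only [Pi.zero_apply] at this
    rw [coeff_zero_eq_constantCoeff, constantCoeff_gen] at this
    exact one_ne_zero this
  · funext p
    have h1 := conv_sum hS m hm (n + p)
    rw [coeff_gen_eq_zero B (by omega)] at h1
    push_cast at h1
    simp only [Matrix.mulVec, dotProduct, Matrix.of_apply, Pi.zero_apply]
    rw [← h1]

open Polynomial in
lemma natDegree_linear_le' {K : Type*} [CommRing K] (c d : K) :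
    (C c + C d * X).natDegree ≤ 1 := by
  refine le_trans (natDegree_add_le _ _) (max_le (by simp) ?_)
  exact le_trans (natDegree_C_mul_le _ _) natDegree_X_le

open Polynomial in
lemma natDegree_prod_linear_le {K : Type*} [CommRing K] {ι : Type*} (s : Finset ι)
    (c d : ι → K) :
    (∏ i ∈ s, (C (c i) + C (d i) * X)).natDegree ≤ s.card := by
  refine le_trans (natDegree_prod_le s _) ?_
  rw [Finset.card_eq_sum_ones]
  exact Finset.sum_le_sum fun i _ => natDegree_linear_le' _ _

open Polynomial in
lemma coeff_card_prod_linear {K : Type*} [CommRing K] {ι : Type*} (s : Finset ι)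
    (c d : ι → K) :
    (∏ i ∈ s, (C (c i) + C (d i) * X)).coeff s.card = ∏ i ∈ s, d i := by
  classical
  induction s using Finset.induction with
  | empty => simp
  | @insert a s ha ih =>
    rw [Finset.prod_insert ha, Finset.prod_insert ha, Finset.card_insert_of_notMem ha]
    rw [add_mul, coeff_add, coeff_C_mul]
    rw [coeff_eq_zero_of_natDegree_lt
      (lt_of_le_of_lt (natDegree_prod_linear_le s c d) (Nat.lt_succ_self _)), mul_zero, zero_add]
    rw [mul_assoc, mul_comm X, ← mul_assoc, coeff_mul_X, coeff_C_mul, ih]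

open Polynomial in
lemma natDegree_det_le {K : Type*} [CommRing K] {m : ℕ}
    (M : Matrix (Fin m) (Fin m) (Polynomial K))
    (h : ∀ p q, (M p q).natDegree ≤ 1) : M.det.natDegree ≤ m := by
  rw [Matrix.det_apply']
  refine natDegree_sum_le_of_forall_le _ _ fun σ _ => ?_
  refine le_trans (natDegree_mul_le) ?_
  rw [natDegree_intCast, zero_add]
  refine le_trans (natDegree_prod_le _ _) ?_
  calc ∑ i, (M (σ i) i).natDegree ≤ ∑ _i : Fin m, 1 := Finset.sum_le_sum fun i _ => h _ _
    _ = m := by simp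

open Polynomial in
lemma coeff_det_linear {K : Type*} [CommRing K] {m : ℕ}
    (u w : Matrix (Fin m) (Fin m) K) :
    (Matrix.det (Matrix.of fun p q => C (u p q) + C (w p q) * X)).coeff m
      = Matrix.det w := by
  rw [Matrix.det_apply', Matrix.det_apply', finset_sum_coeff]
  apply Finset.sum_congr rfl
  intro σ _
  rw [show ((Equiv.Perm.sign σ : ℤ) : Polynomial K) = C ((Equiv.Perm.sign σ : ℤ) : K) by
    simp, coeff_C_mul]
  have := coeff_card_prod_linear (Finset.univ : Finset (Fin m))
    (fun i => u (σ i) i) (fun i => w (σ i) i)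
  rw [Finset.card_univ, Fintype.card_fin] at this
  simp only [Matrix.of_apply]
  rw [this]

open Polynomial Finset in
lemma core_field {K : Type*} [Field K] (n : ℕ) :
    ∀ B A : Multiset K, A.Nodup → Multiset.card B = n →
    ∀ m : ℕ, Multiset.card A = m →
    ∀ S : ℤ → K, IsSeriesOf A B S →
    Matrix.det (Matrix.of fun p q : Fin m =>
        S ((n : ℤ) + (p : ℕ) - (q : ℕ)))
      = (A.map fun a => (B.map fun b => a - b).prod).prod := by
  induction n with
  | zero =>
    intro B A hnd hB m hm S hS
    rw [Multiset.card_eq_zero.mp hB] at hS ⊢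
    have hgB : gen (0 : Multiset K) = 1 := by simp [gen]
    have hS0 : S 0 = 1 := by
      have := congrArg (PowerSeries.constantCoeff) hS.2
      rw [hgB] at this
      simpa [constantCoeff_gen A] using this
    have htri : Matrix.det (Matrix.of fun p q : Fin m =>
        S (((0:ℕ) : ℤ) + (p : ℕ) - (q : ℕ)))
        = ∏ i : Fin m, S (((0:ℕ) : ℤ) + (i : ℕ) - (i : ℕ)) := by
      apply Matrix.det_of_lowerTriangular
      intro i j hij
      have : (i : ℕ) < (j : ℕ) := hij
      exact hS.1 _ (by push_cast; omega)
    rw [htri]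
    have : ∀ i : Fin m, S (((0:ℕ) : ℤ) + (i : ℕ) - (i : ℕ)) = 1 := by
      intro i
      rw [show ((0:ℕ) : ℤ) + (i : ℕ) - (i : ℕ) = 0 by ring, hS0]
    rw [Finset.prod_congr rfl fun i _ => this i, Finset.prod_const_one]
    simp
  | succ n ih =>
    intro B A hnd hB m hm S hS
    classical
    obtain ⟨b, hb⟩ := Multiset.card_pos_iff_exists_mem.mp (by omega : 0 < Multiset.card B)
    set B' := B.erase b with hB'def
    have hcons : B = b ::ₘ B' := (Multiset.cons_erase hb).symm
    have hB'card : Multiset.card B' = n := by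
      rw [hB'def, Multiset.card_erase_of_mem hb, hB]; rfl
    set U := seriesOf A B' with hUdef
    have hU : IsSeriesOf A B' U := isSeriesOf_seriesOf A B'
    have hshift : ∀ j : ℤ, S j = U j - b * U (j - 1) :=
      isSeriesOf_shift hU (hcons ▸ hS)
    have hrect : Matrix.det (Matrix.of fun p q : Fin m => U ((n : ℤ) + (p:ℕ) - (q:ℕ)))
        = (A.map fun a => (B'.map fun x => a - x).prod).prod :=
      ih B' A hnd hB'card m hm U hU
    set Q : Polynomial K := Matrix.det (Matrix.of fun p q : Fin m =>
      C (U ((n : ℤ) + 1 + (p:ℕ) - (q:ℕ))) + C (-U ((n : ℤ) + (p:ℕ) - (q:ℕ))) * X) with hQ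
    have heval : ∀ x : K, Q.eval x = Matrix.det (Matrix.of fun p q : Fin m =>
        U ((n : ℤ) + 1 + (p:ℕ) - (q:ℕ)) - x * U ((n : ℤ) + (p:ℕ) - (q:ℕ))) := by
      intro x
      rw [hQ, ← Polynomial.coe_evalRingHom, RingHom.map_det]
      congr 1
      ext p q
      simp only [RingHom.mapMatrix_apply, Matrix.map_apply, Matrix.of_apply,
        coe_evalRingHom, eval_add, eval_mul, eval_C, eval_X]
      ring
    have hevalb : Q.eval b = Matrix.det (Matrix.of fun p q : Fin m =>
        S (((n+1 : ℕ) : ℤ) + (p:ℕ) - (q:ℕ))) := by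
      rw [heval b]
      congr 1
      ext p q
      simp only [Matrix.of_apply]
      rw [hshift (((n+1 : ℕ) : ℤ) + (p:ℕ) - (q:ℕ))]
      congr 2 <;> push_cast <;> ring
    have hroot : ∀ a ∈ A, Q.eval a = 0 := by
      intro a ha
      have herase := isSeriesOf_erase hU ha
      have hmpos : 0 < m := by
        rw [← hm]; exact Multiset.card_pos_iff_exists_mem.mpr ⟨a, ha⟩
      have hz := det_eq_zero_of_small herase m (n + 1)
        (by rw [Multiset.card_erase_of_mem ha, hm]; exact Nat.pred_lt hmpos.ne')
        (by omega)
      rw [heval a, ← hz]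
      congr 1
      ext p q
      simp only [Matrix.of_apply]
      congr 2 <;> push_cast <;> ring
    have hdeg : Q.natDegree ≤ m := by
      rw [hQ]
      exact natDegree_det_le _ fun p q => natDegree_linear_le' _ _
    have hcoeff : Q.coeff m = (-1) ^ m
        * Matrix.det (Matrix.of fun p q : Fin m => U ((n : ℤ) + (p:ℕ) - (q:ℕ))) := by
      rw [hQ, coeff_det_linear (u := fun p q => U ((n : ℤ) + 1 + (p:ℕ) - (q:ℕ)))
        (w := fun p q => -U ((n : ℤ) + (p:ℕ) - (q:ℕ)))]
      have : (fun p q : Fin m => -U ((n : ℤ) + (p:ℕ) - (q:ℕ)))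
          = -(Matrix.of fun p q : Fin m => U ((n : ℤ) + (p:ℕ) - (q:ℕ))) := rfl
      rw [this, Matrix.det_neg, Fintype.card_fin]
    set F : Finset K := A.toFinset with hF
    have hFcard : F.card = m := by
      rw [hF, Multiset.toFinset_card_of_nodup hnd, hm]
    set G : Polynomial K := ∏ x ∈ F, (X - C x) with hG
    have hGmonic : G.Monic := monic_prod_of_monic _ _ fun x _ => monic_X_sub_C x
    have hGdeg : G.natDegree = m := by
      rw [hG, natDegree_prod_of_monic _ _ fun x _ => monic_X_sub_C x]
      simp [natDegree_X_sub_C, hFcard]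
    have hGcoeff : G.coeff m = 1 := by
      rw [← hGdeg]; exact hGmonic.coeff_natDegree
    set c : K := Q.coeff m with hc
    have hQeq : Q = C c * G := by
      have hcm : (Q - C c * G).coeff m = 0 := by
        rw [coeff_sub, coeff_C_mul, hGcoeff, mul_one, sub_self]
      have hle : (Q - C c * G).natDegree ≤ m :=
        le_trans (natDegree_sub_le _ _)
          (max_le hdeg (le_trans (natDegree_C_mul_le _ _) hGdeg.le))
      have hDzero : Q - C c * G = 0 := by
        by_cases hD0 : Q - C c * G = 0
        · exact hD0
        · refine eq_zero_of_natDegree_lt_card_of_eval_eq_zero' _ F ?_ ?_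
          · intro x hx
            rw [eval_sub, eval_mul, eval_C, hroot x (Multiset.mem_toFinset.mp hx), hG,
              eval_prod]
            rw [Finset.prod_eq_zero hx (by simp), mul_zero, sub_zero]
          · rw [hFcard]
            refine lt_of_le_of_ne hle fun h => hD0 ?_
            rw [← leadingCoeff_eq_zero, leadingCoeff, h]
            exact hcm
      exact sub_eq_zero.mp hDzero
    have hFval : F.val = A := by
      rw [hF, Multiset.toFinset_val, Multiset.dedup_eq_self.mpr hnd]
    have key : Q.eval b = (A.map fun a => (B'.map fun x => a - x).prod).prod
        * (A.map fun a => a - b).prod := by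
      rw [hQeq, eval_mul, eval_C, hG, eval_prod]
      simp only [eval_sub, eval_X, eval_C]
      have h1 : ∏ x ∈ F, (b - x) = (-1) ^ m * ∏ x ∈ F, (x - b) := by
        rw [← hFcard, ← Finset.prod_const (-1 : K), ← Finset.prod_mul_distrib]
        exact Finset.prod_congr rfl fun x _ => by ring
      have h2 : ∏ x ∈ F, (x - b) = (A.map fun a => a - b).prod := by
        rw [Finset.prod_eq_multiset_prod, hFval]
      have h3 : ((-1 : K) ^ m) * ((-1 : K) ^ m) = 1 := by
        rw [← mul_pow]; norm_num
      rw [h1, h2, hcoeff, hrect]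
      calc ((-1:K)^m * (A.map fun a => (B'.map fun x => a - x).prod).prod)
            * ((-1:K)^m * (A.map fun a => a - b).prod)
          = (((-1:K)^m) * ((-1:K)^m)) * ((A.map fun a => (B'.map fun x => a - x).prod).prod
            * (A.map fun a => a - b).prod) := by ring
        _ = _ := by rw [h3, one_mul]
    rw [← hevalb, key, hcons]
    simp only [Multiset.map_cons, Multiset.prod_cons]
    rw [Multiset.prod_map_mul]
    ring

lemma multiset_eq_map_univ {R : Type*} (A : Multiset R) (m : ℕ) (hA : Multiset.card A = m) :
    ∃ f : Fin m → R, Multiset.map f Finset.univ.val = A := by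
  have hlen : A.toList.length = m := by rw [Multiset.length_toList, hA]
  refine ⟨fun i => A.toList.get (Fin.cast hlen.symm i), ?_⟩
  rw [Fin.univ_val_map]
  have h1 : List.ofFn (fun i : Fin m => A.toList.get (Fin.cast hlen.symm i)) = A.toList := by
    apply List.ext_get
    · simp [hlen]
    · intro i hi1 hi2
      simp
  rw [h1, Multiset.coe_toList]

lemma map_double_prod {R R' : Type*} [CommRing R] [CommRing R'] (φ : R →+* R')
    (A B : Multiset R) :
    φ ((A.map fun a => (B.map fun b => a - b).prod).prod)
      = ((A.map φ).map fun a => ((B.map φ).map fun b => a - b).prod).prod := by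
  rw [map_multiset_prod φ, Multiset.map_map, Multiset.map_map]
  congr 1
  apply Multiset.map_congr rfl
  intro a _
  simp only [Function.comp_apply]
  rw [map_multiset_prod φ, Multiset.map_map, Multiset.map_map]
  congr 1
  apply Multiset.map_congr rfl
  intro x _
  simp

open MvPolynomial in
lemma core_univ (m n : ℕ) (S₀ : ℤ → MvPolynomial (Fin m ⊕ Fin n) ℤ)
    (hS₀ : IsSeriesOf (Multiset.map (fun i => X (Sum.inl i)) Finset.univ.val)
        (Multiset.map (fun j => X (Sum.inr j)) Finset.univ.val) S₀) :
    Matrix.det (Matrix.of fun p q : Fin m => S₀ ((n : ℤ) + (p : ℕ) - (q : ℕ)))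
      = ((Multiset.map (fun i => X (Sum.inl i)) Finset.univ.val).map
          (fun a => ((Multiset.map (fun j => X (Sum.inr j)) Finset.univ.val).map
            fun b => a - b).prod)).prod := by
  classical
  let R₀ := MvPolynomial (Fin m ⊕ Fin n) ℤ
  let K := FractionRing R₀
  let φ : R₀ →+* K := algebraMap R₀ K
  have hinj : Function.Injective φ := IsFractionRing.injective R₀ K
  set A₀ : Multiset R₀ := Multiset.map (fun i => X (Sum.inl i)) Finset.univ.val with hA₀
  set B₀ : Multiset R₀ := Multiset.map (fun j => X (Sum.inr j)) Finset.univ.val with hB₀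
  have hXinj : Function.Injective (fun i : Fin m => φ (X (Sum.inl i))) := by
    intro i j h
    exact Sum.inl_injective (X_injective (hinj h))
  have hndA : (A₀.map φ).Nodup := by
    rw [hA₀, Multiset.map_map]
    exact Multiset.Nodup.map hXinj Finset.univ.nodup
  have hcardA : Multiset.card (A₀.map φ) = m := by
    rw [Multiset.card_map, hA₀, Multiset.card_map]
    simp
  have hcardB : Multiset.card (B₀.map φ) = n := by
    rw [Multiset.card_map, hB₀, Multiset.card_map]
    simp
  have hK := core_field n (B₀.map φ) (A₀.map φ) hndA hcardB m hcardA
    (fun j => φ (S₀ j)) (isSeriesOf_map φ hS₀)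
  have hdet : Matrix.det (Matrix.of fun p q : Fin m => φ (S₀ ((n : ℤ) + (p:ℕ) - (q:ℕ))))
      = φ (Matrix.det (Matrix.of fun p q : Fin m => S₀ ((n : ℤ) + (p:ℕ) - (q:ℕ)))) := by
    rw [RingHom.map_det]
    congr 1
  rw [hdet, ← map_double_prod φ A₀ B₀] at hK
  exact hinj hK


open MvPolynomial in
/-- **The resultant as a Schur function:** `R(A,B) = ∏_{a ∈ A, b ∈ B} (a - b)`
equals `S_{(n^m)}(A - B)`, the Schur function of the rectangular partition with
`m` parts equal to `n`, where `m = card A` and `n = card B`. -/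
theorem resultant_eq_schur_rectangle {R : Type*} [CommRing R] (m n : ℕ) (A B : Multiset R)
    (hA : Multiset.card A = m) (hB : Multiset.card B = n)
    (S : ℤ → R) (hS : IsSeriesOf A B S) :
    (A.map (fun a => (B.map fun b => a - b).prod)).prod =
      schur S (fun _ : Fin m => (n : ℤ)) := by
  classical
  obtain ⟨fa, hfa⟩ := multiset_eq_map_univ A m hA
  obtain ⟨fb, hfb⟩ := multiset_eq_map_univ B n hB
  set ψ : MvPolynomial (Fin m ⊕ Fin n) ℤ →+* R :=
    (MvPolynomial.aeval (Sum.elim fa fb) : MvPolynomial (Fin m ⊕ Fin n) ℤ →ₐ[ℤ] R).toRingHom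
    with hψ
  set A₀ : Multiset (MvPolynomial (Fin m ⊕ Fin n) ℤ) :=
    Multiset.map (fun i => X (Sum.inl i)) Finset.univ.val with hA₀
  set B₀ : Multiset (MvPolynomial (Fin m ⊕ Fin n) ℤ) :=
    Multiset.map (fun j => X (Sum.inr j)) Finset.univ.val with hB₀
  have hmapA : A₀.map ψ = A := by
    rw [hA₀, Multiset.map_map, ← hfa]
    apply Multiset.map_congr rfl
    intro i _
    simp [hψ]
  have hmapB : B₀.map ψ = B := by
    rw [hB₀, Multiset.map_map, ← hfb]
    apply Multiset.map_congr rfl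
    intro j _
    simp [hψ]
  set S₀ : ℤ → MvPolynomial (Fin m ⊕ Fin n) ℤ := seriesOf A₀ B₀ with hS₀def
  have hS₀ : IsSeriesOf A₀ B₀ S₀ := isSeriesOf_seriesOf A₀ B₀
  have hS' : IsSeriesOf A B fun j => ψ (S₀ j) := by
    have := isSeriesOf_map ψ hS₀
    rwa [hmapA, hmapB] at this
  have hSeq : S = fun j => ψ (S₀ j) := isSeriesOf_unique hS hS'
  have huniv := core_univ m n S₀ hS₀
  have happ := congrArg ψ huniv
  rw [RingHom.map_det] at happ
  rw [map_double_prod ψ A₀ B₀, hmapA, hmapB] at happ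
  rw [show schur S (fun _ : Fin m => (n : ℤ))
      = Matrix.det (Matrix.of fun p q : Fin m => S ((n : ℤ) + (p : ℕ) - (q : ℕ))) from rfl]
  rw [hSeq, ← happ]
  congr 1
end

section
/- Let x_1, x_2 be independent variables and let D be the alphabet (2x_1, 2x_2, x_1 + x_2). Then F^{(3)}_2 evaluated on the difference (x_1, x_2) - D equals -5 · (x_1 x_2)^2 (x_1 - 2x_2)(x_2 - 2x_1). Concretely, S_{(2,2,2)} + 5 S_{(1,2,3)} + 6 S_{(1,1,4)} + 19 S_{(2,4)} + 30 S_{(1,5)} + 36 S_{(6)}, each evaluated on (x_1,x_2) - D, equals -5 (x_1 x_2)^2 (x_1 - 2x_2)(x_2 - 2x_1). -/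
set_option maxHeartbeats 2000000 in
/-- `F^{(3)}_2((x_1,x_2) - D) = -5 (x_1 x_2)^2 (x_1 - 2x_2)(x_2 - 2x_1)` for
`D = (2x_1, 2x_2, x_1 + x_2)`, where
`F^{(3)}_2 = S_{(2,2,2)} + 5 S_{(1,2,3)} + 6 S_{(1,1,4)} + 19 S_{(2,4)} + 30 S_{(1,5)} + 36 S_{(6)}`. -/
theorem F32_on_III22 {R : Type*} [CommRing R] (x1 x2 : R)
    (S : ℤ → R) (hS : IsSeriesOf {x1, x2} {2 * x1, 2 * x2, x1 + x2} S) :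
    schur S ![2, 2, 2] + 5 * schur S ![1, 2, 3] + 6 * schur S ![1, 1, 4] +
        19 * schur S ![2, 4] + 30 * schur S ![1, 5] + 36 * schur S ![6] =
      -5 * ((x1 * x2) ^ 2 * (x1 - 2 * x2) * (x2 - 2 * x1)) := by
  obtain ⟨hneg, heq⟩ := hS
  have key : ∀ n : ℕ, PowerSeries.coeff n ((PowerSeries.mk fun n : ℕ => S (n : ℤ)) * gen {x1, x2})
      = PowerSeries.coeff n (gen {2*x1, 2*x2, x1+x2}) := fun n => congrArg _ heq
  have h0 := key 0; have h1 := key 1; have h2 := key 2; have h3 := key 3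
  have h4 := key 4; have h5 := key 5; have h6 := key 6
  simp only [gen, Multiset.insert_eq_cons, Multiset.map_cons, Multiset.map_singleton,
    Multiset.prod_cons, Multiset.prod_singleton, PowerSeries.coeff_mul,
    Finset.Nat.sum_antidiagonal_eq_sum_range_succ_mk, Finset.sum_range_succ,
    Finset.sum_range_zero, PowerSeries.coeff_mk, map_sub, PowerSeries.coeff_one,
    PowerSeries.coeff_C_mul, PowerSeries.coeff_X] at h0 h1 h2 h3 h4 h5 h6
  norm_num at h0 h1 h2 h3 h4 h5 h6
  have v0 : S 0 = 1 := by linear_combination h0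
  have v1 : S 1 = -2*(x1+x2) := by rw [v0] at h1; linear_combination h1
  have v2 : S 2 = 3*(x1*x2) := by rw [v0, v1] at h2; linear_combination h2
  have v3 : S 3 = x1*x2*(x1+x2) := by rw [v1, v2] at h3; linear_combination h3
  have v4 : S 4 = x1*x2*(x1^2 - x1*x2 + x2^2) := by rw [v2, v3] at h4; linear_combination h4
  have v5 : S 5 = x1*x2*(x1^3 - x1^2*x2 - x1*x2^2 + x2^3) := by
    rw [v3, v4] at h5; linear_combination h5
  have v6 : S 6 = x1*x2*(x1^4 - x1^3*x2 - x1^2*x2^2 - x1*x2^3 + x2^4) := by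
    rw [v4, v5] at h6; linear_combination h6
  have vneg : S (-1) = 0 := hneg _ (by norm_num)
  simp only [schur, Matrix.det_fin_three, Matrix.det_fin_two, Matrix.det_fin_one,
    Matrix.of_apply, Matrix.cons_val', Matrix.cons_val_zero, Matrix.cons_val_one,
    Matrix.head_cons, Matrix.empty_val', Matrix.cons_val_fin_one, Matrix.head_fin_const,
    Matrix.cons_val_two, Matrix.tail_cons]
  norm_num
  rw [vneg, v0, v1, v2, v3, v4, v5, v6]
  ring
end
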